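/- Graph density partition bound: for any undirected graph G = (V, E) and any integer k ≤ |V|, there exists a partition of V into k nonempty parts V_1,...,V_k such that the densities of any two parts differ by at most 1, where the density of S is ρ(S) = |E(S)|/|S| (number of edges with both endpoints in S divided by |S|), with ρ(∅) = 0. -/

import Mathlib

def IsPartition {ι α : Type*} (A : ι → Finset α) : Prop :=
  ∀ x : α, ∃! i, x ∈ A i

/-- The density of `S`: the number of edges of `G` with both endpoints in `S`
divided by `|S|` (each such edge corresponds to two ordered adjacent pairs,
hence the division by `2 * |S|`); the density of `∅` is `0`. -/
noncomputable def density {V : Type*} [Fintype V] [DecidableEq V]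
    (G : SimpleGraph V) [DecidableRel G.Adj] (S : Finset V) : ℝ :=
  ((Finset.univ.filter (fun p : V × V => G.Adj p.1 p.2 ∧ p.1 ∈ S ∧ p.2 ∈ S)).card : ℝ) /
    (2 * S.card)

section Aux
open Finset

set_option linter.unusedSectionVars false

variable {V : Type*} [Fintype V] [DecidableEq V] (G : SimpleGraph V) [DecidableRel G.Adj]

def Ecard' (S : Finset V) : ℕ :=
  (Finset.univ.filter (fun p : V × V => G.Adj p.1 p.2 ∧ p.1 ∈ S ∧ p.2 ∈ S)).card

def dg (S : Finset V) (v : V) : ℕ := (S.filter (G.Adj v)).card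

lemma density_eq (S : Finset V) : density G S = (Ecard' G S : ℝ) / (2 * S.card) := rfl

lemma dg_le (S : Finset V) (v : V) : dg G S v ≤ S.card := card_filter_le _ _

lemma Ecard'_eq_sum (S : Finset V) : Ecard' G S = ∑ v ∈ S, dg G S v := by
  rw [Ecard', Finset.card_eq_sum_card_fiberwise (f := Prod.fst) (t := S)
    (fun p hp => by simp only [mem_coe, mem_filter] at hp; exact hp.2.2.1)]
  refine Finset.sum_congr rfl fun v hv => ?_
  rw [dg]
  have : ((univ.filter fun p : V × V => G.Adj p.1 p.2 ∧ p.1 ∈ S ∧ p.2 ∈ S).filter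
      fun p => p.1 = v) = (S.filter (G.Adj v)).image (fun w => (v, w)) := by
    ext ⟨a, b⟩
    simp only [mem_filter, mem_univ, true_and, mem_image]
    constructor
    · rintro ⟨⟨hadj, _, hb⟩, rfl⟩
      exact ⟨b, ⟨hb, hadj⟩, rfl⟩
    · rintro ⟨w, ⟨hw, hadj⟩, h⟩
      cases h
      exact ⟨⟨hadj, hv, hw⟩, rfl⟩
  rw [this, card_image_of_injective _ (fun a b h => by simpa using h)]

lemma Ecard'_erase (S : Finset V) (v : V) (hv : v ∈ S) :
    Ecard' G (S.erase v) + 2 * dg G S v = Ecard' G S := by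
  classical
  set A := univ.filter fun p : V × V => G.Adj p.1 p.2 ∧ p.1 ∈ S ∧ p.2 ∈ S with hA
  have hsplit := Finset.card_filter_add_card_filter_not
    (s := A) (p := fun p : V × V => p.1 = v ∨ p.2 = v)
  have h1 : A.filter (fun p : V × V => ¬(p.1 = v ∨ p.2 = v)) =
      univ.filter fun p : V × V => G.Adj p.1 p.2 ∧ p.1 ∈ S.erase v ∧ p.2 ∈ S.erase v := by
    ext ⟨a, b⟩
    simp only [hA, mem_filter, mem_univ, true_and, mem_erase, not_or]
    tauto
  have h2 : A.filter (fun p : V × V => p.1 = v) = (S.filter (G.Adj v)).image (fun w => (v, w)) := by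
    ext ⟨a, b⟩
    simp only [hA, mem_filter, mem_univ, true_and, mem_image]
    constructor
    · rintro ⟨⟨hadj, _, hb⟩, rfl⟩
      exact ⟨b, ⟨hb, hadj⟩, rfl⟩
    · rintro ⟨w, ⟨hw, hadj⟩, h⟩
      cases h
      exact ⟨⟨hadj, hv, hw⟩, rfl⟩
  have h3 : A.filter (fun p : V × V => p.1 = v ∨ p.2 = v) =
      (A.filter (fun p : V × V => p.1 = v)) ∪ (A.filter (fun p : V × V => p.2 = v)) := by
    rw [← filter_or]
  have h4 : A.filter (fun p : V × V => p.2 = v) = (S.filter (G.Adj v)).image (fun w => (w, v)) := by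
    ext ⟨a, b⟩
    simp only [hA, mem_filter, mem_univ, true_and, mem_image]
    constructor
    · rintro ⟨⟨hadj, ha, _⟩, rfl⟩
      exact ⟨a, ⟨ha, hadj.symm⟩, rfl⟩
    · rintro ⟨w, ⟨hw, hadj⟩, h⟩
      cases h
      exact ⟨⟨hadj.symm, hw, hv⟩, rfl⟩
  have hdisj : Disjoint (A.filter (fun p : V × V => p.1 = v))
      (A.filter (fun p : V × V => p.2 = v)) := by
    rw [Finset.disjoint_left]
    rintro ⟨a, b⟩ ha hb
    simp only [hA, mem_filter, mem_univ, true_and] at ha hb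
    obtain ⟨⟨hadj, _⟩, rfl⟩ := ha
    obtain ⟨_, rfl⟩ := hb
    exact G.irrefl hadj
  have hcard3 : (A.filter (fun p : V × V => p.1 = v ∨ p.2 = v)).card = 2 * dg G S v := by
    rw [h3, card_union_of_disjoint hdisj, h2, h4,
      card_image_of_injective _ (fun a b h => by simpa using h),
      card_image_of_injective _ (fun a b h => by simpa using h), dg]
    ring
  rw [hcard3, h1, hA] at hsplit
  rw [Ecard', Ecard']
  omega

lemma dg_insert_self (T : Finset V) (v : V) : dg G (insert v T) v = dg G T v := by
  rw [dg, dg, filter_insert, if_neg (G.irrefl)]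

lemma Ecard'_insert (T : Finset V) (v : V) (hv : v ∉ T) :
    Ecard' G (insert v T) = Ecard' G T + 2 * dg G T v := by
  have h := Ecard'_erase G (insert v T) v (mem_insert_self v T)
  rw [erase_insert hv, dg_insert_self] at h
  omega

lemma exists_max_deg (S : Finset V) (hS : S.Nonempty) :
    ∃ v ∈ S, Ecard' G S ≤ S.card * dg G S v := by
  by_contra h
  push_neg at h
  have hlt : ∑ v ∈ S, S.card * dg G S v < ∑ _v ∈ S, Ecard' G S :=
    Finset.sum_lt_sum_of_nonempty hS h
  rw [← Finset.mul_sum, ← Ecard'_eq_sum, Finset.sum_const, smul_eq_mul] at hlt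
  omega

lemma density_nonneg (S : Finset V) : 0 ≤ density G S := by
  rw [density_eq]; positivity

lemma facts_of_density_pos (S : Finset V) (h : 0 < density G S) :
    2 ≤ S.card ∧ 1 ≤ Ecard' G S := by
  rw [density_eq] at h
  have hE : 0 < Ecard' G S := by
    by_contra hE
    push_neg at hE
    interval_cases hE' : Ecard' G S
    · simp at h
  obtain ⟨⟨a, b⟩, hp⟩ := Finset.card_pos.mp hE
  simp only [mem_filter, mem_univ, true_and] at hp
  obtain ⟨hadj, ha, hb⟩ := hp
  exact ⟨Finset.one_lt_card.mpr ⟨a, ha, b, hb, G.ne_of_adj hadj⟩, hE⟩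

lemma density_erase_lt (S : Finset V) (v : V) (hv : v ∈ S) (hE : 1 ≤ Ecard' G S)
    (h2 : 2 ≤ S.card) (hd : Ecard' G S ≤ S.card * dg G S v) :
    density G (S.erase v) < density G S := by
  have hc : (S.erase v).card = S.card - 1 := card_erase_of_mem hv
  have he := Ecard'_erase G S v hv
  rw [density_eq, density_eq, hc]
  have h1 : (0:ℝ) < 2 * ((S.card - 1 : ℕ) : ℝ) := by
    have : 1 ≤ S.card - 1 := by omega
    push_cast
    positivity
  have h2' : (0:ℝ) < 2 * (S.card : ℝ) := by positivity
  rw [div_lt_div_iff₀ h1 h2']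
  have hcast : ((S.card - 1 : ℕ) : ℝ) = (S.card : ℝ) - 1 := by
    push_cast [Nat.cast_sub (by omega : 1 ≤ S.card)]; ring
  rw [hcast]
  have he' : (Ecard' G (S.erase v) : ℝ) = (Ecard' G S : ℝ) - 2 * dg G S v := by
    have := congrArg (fun n : ℕ => (n : ℝ)) he
    push_cast at this
    linarith
  have hd' : (Ecard' G S : ℝ) ≤ (S.card : ℝ) * dg G S v := by exact_mod_cast hd
  have hE' : (1:ℝ) ≤ (Ecard' G S : ℝ) := by exact_mod_cast hE
  have hs' : (2:ℝ) ≤ (S.card : ℝ) := by exact_mod_cast h2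
  nlinarith [he', hd', hE', hs']

lemma density_insert_le (T : Finset V) (v : V) (hv : v ∉ T) (hT : T.Nonempty) :
    density G (insert v T) ≤ density G T + 1 := by
  have hc : (insert v T).card = T.card + 1 := card_insert_of_notMem hv
  have he := Ecard'_insert G T v hv
  have ht : 1 ≤ T.card := card_pos.mpr hT
  rw [density_eq, density_eq, hc, he]
  have ht' : (1:ℝ) ≤ (T.card : ℝ) := by exact_mod_cast ht
  have hd' : (dg G T v : ℝ) ≤ (T.card : ℝ) := by exact_mod_cast dg_le G T v
  have hE' : (0:ℝ) ≤ (Ecard' G T : ℝ) := by positivity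
  have h1 : (0:ℝ) < 2 * ((T.card + 1 : ℕ) : ℝ) := by push_cast; positivity
  have h2 : (0:ℝ) < 2 * (T.card : ℝ) := by positivity
  rw [div_add' _ _ _ (ne_of_gt h2), div_le_div_iff₀ h1 h2]
  push_cast
  nlinarith

lemma density_erase_lt1 (S : Finset V) (v : V) (hv : v ∈ S) (h : 1 < density G S)
    (hd : Ecard' G S ≤ S.card * dg G S v) :
    density G (S.erase v) < density G S := by
  obtain ⟨h2, hE⟩ := facts_of_density_pos G S (lt_trans one_pos h)
  exact density_erase_lt G S v hv hE h2 hd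

end Aux

open Finset in
/-- For any graph and any `1 ≤ k ≤ |V|`, the vertex set can be partitioned
into `k` nonempty parts whose densities pairwise differ by at most `1`. -/
theorem density_partition_bound {V : Type*} [Fintype V] [DecidableEq V]
    (G : SimpleGraph V) [DecidableRel G.Adj]
    (k : ℕ) (hk : 1 ≤ k) (hkV : k ≤ Fintype.card V) :
    ∃ P : Fin k → Finset V, IsPartition P ∧ (∀ i, (P i).Nonempty) ∧
      ∀ i j, |density G (P i) - density G (P j)| ≤ 1 := by
  classical
  haveI : Nonempty (Fin k) := ⟨⟨0, hk⟩⟩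
  -- base partition
  let e : V ≃ Fin (Fintype.card V) := Fintype.equivFin V
  let f : V → Fin k := fun v => ⟨min (e v).val (k - 1), by omega⟩
  let P0 : Fin k → Finset V := fun i => univ.filter (fun v => f v = i)
  have hpart0 : IsPartition P0 := by
    intro x
    refine ⟨f x, by simp [P0], fun j hj => ?_⟩
    simp only [P0, mem_filter] at hj
    exact hj.2.symm
  have hne0 : ∀ i, (P0 i).Nonempty := by
    intro i
    refine ⟨e.symm ⟨i.val, lt_of_lt_of_le i.isLt hkV⟩, ?_⟩
    simp only [P0, f, mem_filter, mem_univ, true_and, Equiv.apply_symm_apply]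
    exact Fin.ext (by simp; omega)
  -- minimization
  let Ps : Finset (Fin k → Finset V) :=
    univ.filter (fun P => IsPartition P ∧ ∀ i, (P i).Nonempty)
  let M : (Fin k → Finset V) → ℝ := fun P => univ.sup' univ_nonempty (fun i => density G (P i))
  let C : (Fin k → Finset V) → ℕ := fun P => (univ.filter (fun i => density G (P i) = M P)).card
  let μ : (Fin k → Finset V) → ℝ ×ₗ ℕ := fun P => toLex (M P, C P)
  have hPsne : Ps.Nonempty := by
    refine ⟨P0, ?_⟩
    simp only [Ps, mem_filter, mem_univ, true_and]
    exact ⟨hpart0, hne0⟩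
  obtain ⟨P, hPPs, hPmin⟩ := Ps.exists_min_image μ hPsne
  simp only [Ps, mem_filter, mem_univ, true_and] at hPPs
  obtain ⟨hpart, hne⟩ := hPPs
  refine ⟨P, hpart, hne, ?_⟩
  by_contra hcon
  push_neg at hcon
  obtain ⟨a, b, hab⟩ := hcon
  -- get a pair with difference > 1
  have hab' : ∃ a b, 1 < density G (P a) - density G (P b) := by
    rcases lt_abs.mp hab with h | h
    · exact ⟨a, b, h⟩
    · exact ⟨b, a, by linarith⟩
  obtain ⟨a, b, hab1⟩ := hab'
  obtain ⟨i0, -, hi0⟩ := Finset.exists_mem_eq_sup' (univ_nonempty) (fun i => density G (P i))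
  obtain ⟨j0, -, hj0⟩ := Finset.exists_mem_eq_inf' (univ_nonempty) (fun i => density G (P i))
  have hMi0 : density G (P i0) = M P := hi0.symm
  have hsup_ge : ∀ i, density G (P i) ≤ M P := fun i => le_sup' (fun i => density G (P i)) (mem_univ i)
  have hinf_le : ∀ i, univ.inf' univ_nonempty (fun i => density G (P i)) ≤ density G (P i) :=
    fun i => inf'_le (fun i => density G (P i)) (mem_univ i)
  have hgap : 1 < density G (P i0) - density G (P j0) := by
    have h1 := hsup_ge a
    have h2 := hinf_le b
    linarith [hMi0, hj0]
  have hij : i0 ≠ j0 := by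
    intro h; rw [h] at hgap; linarith
  have hd_pos : 1 < density G (P i0) := by
    have := density_nonneg G (P j0); linarith
  have h2card : 2 ≤ (P i0).card := (facts_of_density_pos G _ (lt_trans one_pos hd_pos)).1
  obtain ⟨v, hv, hvd⟩ := exists_max_deg G (P i0) (hne i0)
  have hvnot : v ∉ P j0 := fun hv' => hij ((hpart v).unique hv hv')
  -- the exchanged partition
  let Q : Fin k → Finset V := fun l =>
    if l = i0 then (P i0).erase v else if l = j0 then insert v (P j0) else P l
  have hQi0 : Q i0 = (P i0).erase v := by simp [Q]
  have hQj0 : Q j0 = insert v (P j0) := by simp [Q, hij.symm]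
  have hQother : ∀ l, l ≠ i0 → l ≠ j0 → Q l = P l := by
    intro l h1 h2; simp [Q, h1, h2]
  have hpartQ : IsPartition Q := by
    intro x
    by_cases hx : x = v
    · subst hx
      refine ⟨j0, by simp only [hQj0]; exact mem_insert_self _ _, fun l hl => ?_⟩
      by_contra hlj
      have hl' : x ∈ Q l := hl
      rcases eq_or_ne l i0 with rfl | hli
      · rw [hQi0] at hl'; exact (notMem_erase _ _) hl'
      · rw [hQother l hli hlj] at hl'
        exact hli ((hpart x).unique hl' hv)
    · obtain ⟨i, hi, hiu⟩ := hpart x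
      have hmem : x ∈ Q i := by
        rcases eq_or_ne i i0 with rfl | h1
        · rw [hQi0]; exact mem_erase_of_ne_of_mem hx hi
        · rcases eq_or_ne i j0 with rfl | h2
          · rw [hQj0]; exact mem_insert_of_mem hi
          · rw [hQother i h1 h2]; exact hi
      refine ⟨i, hmem, fun l hl => ?_⟩
      have hl' : x ∈ Q l := hl
      apply hiu
      show x ∈ P l
      rcases eq_or_ne l i0 with rfl | h1
      · rw [hQi0] at hl'; exact mem_of_mem_erase hl'
      · rcases eq_or_ne l j0 with rfl | h2
        · rw [hQj0] at hl'; exact (mem_insert.mp hl').resolve_left hx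
        · rwa [hQother l h1 h2] at hl'
  have hneQ : ∀ l, (Q l).Nonempty := by
    intro l
    rcases eq_or_ne l i0 with rfl | h1
    · rw [hQi0]
      rw [← card_pos, card_erase_of_mem hv]; omega
    · rcases eq_or_ne l j0 with rfl | h2
      · rw [hQj0]; exact insert_nonempty _ _
      · rw [hQother l h1 h2]; exact hne l
  have hQPs : Q ∈ Ps := by
    simp only [Ps, mem_filter, mem_univ, true_and]
    exact ⟨hpartQ, hneQ⟩
  -- density bounds on the new parts
  have hdQi0 : density G (Q i0) < M P := by
    rw [hQi0, ← hMi0]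
    exact density_erase_lt1 G (P i0) v hv hd_pos hvd
  have hdQj0 : density G (Q j0) < M P := by
    rw [hQj0]
    have h1 := density_insert_le G (P j0) v hvnot (hne j0)
    rw [← hMi0]
    linarith
  have hMQ_le : M Q ≤ M P := by
    apply Finset.sup'_le
    intro l _
    rcases eq_or_ne l i0 with rfl | h1
    · exact le_of_lt hdQi0
    · rcases eq_or_ne l j0 with rfl | h2
      · exact le_of_lt hdQj0
      · rw [hQother l h1 h2]; exact hsup_ge l
  have hμlt : μ Q < μ P := by
    rcases lt_or_eq_of_le hMQ_le with hlt | heq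
    · exact Prod.Lex.lt_iff.mpr (Or.inl hlt)
    · refine Prod.Lex.lt_iff.mpr (Or.inr ⟨heq, ?_⟩)
      have hsub : univ.filter (fun i => density G (Q i) = M Q) ⊆
          (univ.filter (fun i => density G (P i) = M P)).erase i0 := by
        intro l hl
        simp only [mem_filter, mem_univ, true_and] at hl
        rw [heq] at hl
        have h1 : l ≠ i0 := by rintro rfl; rw [hl] at hdQi0; exact lt_irrefl _ hdQi0
        have h2 : l ≠ j0 := by rintro rfl; rw [hl] at hdQj0; exact lt_irrefl _ hdQj0
        rw [hQother l h1 h2] at hl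
        exact mem_erase_of_ne_of_mem h1 (by simp [hl])
      have hi0mem : i0 ∈ univ.filter (fun i => density G (P i) = M P) := by
        simp [hMi0]
      calc C Q ≤ ((univ.filter (fun i => density G (P i) = M P)).erase i0).card :=
            card_le_card hsub
        _ < C P := card_erase_lt_of_mem hi0mem
  exact absurd (hPmin Q hQPs) (not_le.mpr hμlt)
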